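/- For real n ≥ 4, the function h(n) = n·cos(2π/n) − (n−1)·cos(π/(n−1)) + 1 is monotone nondecreasing, since h'(n) = e(2π/n) − e(π/(n−1)) ≥ 0 where e(x) = cos(x) + x·sin(x). -/

import Mathlib

open Real Set

lemma e_hasDerivAt (x : ℝ) :
    HasDerivAt (fun y : ℝ => Real.cos y + y * Real.sin y) (x * Real.cos x) x := by
  have h := (Real.hasDerivAt_cos x).add ((hasDerivAt_id x).mul (Real.hasDerivAt_sin x))
  refine h.congr_deriv ?_
  simp [id]

lemma e_mono : MonotoneOn (fun y : ℝ => Real.cos y + y * Real.sin y)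
    (Set.Icc 0 (Real.pi / 2)) := by
  have hc : ContinuousOn (fun y : ℝ => Real.cos y + y * Real.sin y) (Set.Icc 0 (Real.pi / 2)) :=
    (Real.continuous_cos.add (continuous_id.mul Real.continuous_sin)).continuousOn
  apply monotoneOn_of_deriv_nonneg (convex_Icc _ _) hc
  · intro x hx
    exact (e_hasDerivAt x).differentiableAt.differentiableWithinAt
  intro x hx
  rw [interior_Icc] at hx
  rw [(e_hasDerivAt x).deriv]
  exact mul_nonneg (le_of_lt hx.1)
    (Real.cos_nonneg_of_mem_Icc ⟨by nlinarith [hx.1, Real.pi_pos], le_of_lt hx.2⟩)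

lemma main_deriv (n : ℝ) (hn : 4 ≤ n) :
    HasDerivAt (fun m : ℝ => m * Real.cos (2 * Real.pi / m)
        - (m - 1) * Real.cos (Real.pi / (m - 1)) + 1)
      ((Real.cos (2 * Real.pi / n) + (2 * Real.pi / n) * Real.sin (2 * Real.pi / n))
        - (Real.cos (Real.pi / (n - 1)) + (Real.pi / (n - 1)) * Real.sin (Real.pi / (n - 1)))) n := by
  have hn0 : n ≠ 0 := by linarith
  have hn1 : n - 1 ≠ 0 := by intro h; nlinarith
  have h1 : HasDerivAt (fun m : ℝ => 2 * Real.pi / m) (-(2 * Real.pi) / n ^ 2) n := by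
    simpa [Pi.div_def] using (hasDerivAt_const n (2 * Real.pi)).div (hasDerivAt_id n) hn0
  have h2 : HasDerivAt (fun m : ℝ => Real.pi / (m - 1)) (-Real.pi / (n - 1) ^ 2) n := by
    have := (hasDerivAt_const n Real.pi).div ((hasDerivAt_id n).sub_const 1) hn1
    simpa [Pi.div_def] using this
  have hc1 : HasDerivAt (fun m : ℝ => Real.cos (2 * Real.pi / m))
      (-Real.sin (2 * Real.pi / n) * (-(2 * Real.pi) / n ^ 2)) n :=
    (Real.hasDerivAt_cos _).comp n h1
  have hc2 : HasDerivAt (fun m : ℝ => Real.cos (Real.pi / (m - 1)))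
      (-Real.sin (Real.pi / (n - 1)) * (-Real.pi / (n - 1) ^ 2)) n :=
    (Real.hasDerivAt_cos _).comp n h2
  have hA : HasDerivAt (fun m : ℝ => m * Real.cos (2 * Real.pi / m))
      (1 * Real.cos (2 * Real.pi / n) + n * (-Real.sin (2 * Real.pi / n) * (-(2 * Real.pi) / n ^ 2))) n :=
    (hasDerivAt_id n).mul hc1
  have hB : HasDerivAt (fun m : ℝ => (m - 1) * Real.cos (Real.pi / (m - 1)))
      (1 * Real.cos (Real.pi / (n - 1)) + (n - 1) * (-Real.sin (Real.pi / (n - 1)) * (-Real.pi / (n - 1) ^ 2))) n :=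
    ((hasDerivAt_id n).sub_const 1).mul hc2
  have h := (hA.sub hB).add_const 1
  refine h.congr_deriv ?_
  field_simp

theorem h_monotone_on_Ici_four :
    (∀ n : ℝ, 4 ≤ n →
      HasDerivAt (fun m : ℝ => m * Real.cos (2 * Real.pi / m)
          - (m - 1) * Real.cos (Real.pi / (m - 1)) + 1)
        ((Real.cos (2 * Real.pi / n) + (2 * Real.pi / n) * Real.sin (2 * Real.pi / n))
          - (Real.cos (Real.pi / (n - 1)) + (Real.pi / (n - 1)) * Real.sin (Real.pi / (n - 1)))) n) ∧
    MonotoneOn (fun m : ℝ => m * Real.cos (2 * Real.pi / m)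
        - (m - 1) * Real.cos (Real.pi / (m - 1)) + 1) (Set.Ici (4 : ℝ)) := by
  refine ⟨fun n hn => main_deriv n hn, ?_⟩
  have hcont : ContinuousOn (fun m : ℝ => m * Real.cos (2 * Real.pi / m)
      - (m - 1) * Real.cos (Real.pi / (m - 1)) + 1) (Set.Ici (4 : ℝ)) := by
    intro x hx
    exact ((main_deriv x hx).continuousAt).continuousWithinAt
  apply monotoneOn_of_deriv_nonneg (convex_Ici _) hcont
  · intro x hx
    rw [interior_Ici] at hx
    exact (main_deriv x (le_of_lt hx)).differentiableAt.differentiableWithinAt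
  intro x hx
  rw [interior_Ici] at hx
  have hx4 : (4 : ℝ) ≤ x := le_of_lt hx
  rw [(main_deriv x hx4).deriv]
  have hpi := Real.pi_pos
  have hx0 : (0 : ℝ) < x := by linarith
  have hx1 : (0 : ℝ) < x - 1 := by linarith
  have ha : (0 : ℝ) ≤ Real.pi / (x - 1) := by positivity
  have hab : Real.pi / (x - 1) ≤ 2 * Real.pi / x := by
    rw [div_le_div_iff₀ hx1 hx0]
    nlinarith
  have hb : 2 * Real.pi / x ≤ Real.pi / 2 := by
    rw [div_le_div_iff₀ hx0 (by norm_num : (0:ℝ) < 2)]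
    nlinarith
  have := e_mono ⟨ha, le_trans hab hb⟩ ⟨le_trans ha hab, hb⟩ hab
  simpa using sub_nonneg.mpr this
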